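/- Fix integers s ≥ 2, Δ ≥ 1, and a positive integer n with n < (Δ+1)/(s-1). Let G be the graph on vertex set {1,...,Δ+1} × {1,...,n}, with parts V_i = {(i,j) : 1 ≤ j ≤ n}, where (i,j) and (i',j') are adjacent iff j = j' and i ≠ i'. Then G has maximum degree Δ, local degree 1 (every vertex has at most one neighbor in each part other than its own), and G has no K_s-free transversal: every transversal contains a clique of size s. -/

import Mathlib

/-- The graph on {1,…,Δ+1} × {1,…,n} with (i,j) ~ (i',j') iff j = j' and i ≠ i',
with parts V_i = {(i,j) : j}, where n(s-1) < Δ+1: it has maximum degree Δ,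
local degree at most 1, and every transversal contains a clique of size s. -/
theorem stmt_1 (s Δ n : ℕ) (hs : 2 ≤ s) (hΔ : 1 ≤ Δ) (hn : 0 < n)
    (hsize : n * (s - 1) < Δ + 1)
    (G : SimpleGraph (Fin (Δ + 1) × Fin n))
    (hG : G = SimpleGraph.fromRel (fun a b => a.2 = b.2)) :
    (∀ v, (G.neighborSet v).ncard = Δ) ∧
    (∀ (v : Fin (Δ + 1) × Fin n) (i : Fin (Δ + 1)), i ≠ v.1 →
      (G.neighborSet v ∩ {w : Fin (Δ + 1) × Fin n | w.1 = i}).ncard ≤ 1) ∧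
    (∀ f : Fin (Δ + 1) → Fin (Δ + 1) × Fin n, (∀ i, (f i).1 = i) →
      ∃ S : Finset (Fin (Δ + 1)), S.card = s ∧
        ∀ i ∈ S, ∀ j ∈ S, i ≠ j → G.Adj (f i) (f j)) := by
  subst hG
  refine ⟨?_, ?_, ?_⟩
  · intro v
    have hset : (SimpleGraph.fromRel (fun a b : Fin (Δ + 1) × Fin n => a.2 = b.2)).neighborSet v
        = (fun i => (i, v.2)) '' {v.1}ᶜ := by
      ext w
      simp only [SimpleGraph.mem_neighborSet, SimpleGraph.fromRel_adj, Set.mem_image,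
        Set.mem_compl_iff, Set.mem_singleton_iff]
      constructor
      · rintro ⟨hne, h | h⟩ <;>
          exact ⟨w.1, fun h1 => hne (Prod.ext h1.symm (by simp_all)), by ext <;> simp_all⟩
      · rintro ⟨i, hi, rfl⟩
        exact ⟨fun h => hi (congrArg Prod.fst h).symm, Or.inr rfl⟩
    rw [hset, Set.ncard_image_of_injective _ (fun a b h => (Prod.ext_iff.1 h).1)]
    have := Set.ncard_add_ncard_compl ({v.1} : Set (Fin (Δ + 1)))
    simp only [Set.ncard_singleton, Nat.card_eq_fintype_card, Fintype.card_fin] at this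
    omega
  · intro v i hi
    have hsub : (SimpleGraph.fromRel (fun a b : Fin (Δ + 1) × Fin n => a.2 = b.2)).neighborSet v
        ∩ {w | w.1 = i} ⊆ {(i, v.2)} := by
      rintro ⟨a, b⟩ ⟨hadj, hfst⟩
      simp only [SimpleGraph.mem_neighborSet, SimpleGraph.fromRel_adj] at hadj
      simp only [Set.mem_setOf_eq] at hfst
      obtain ⟨hne, h | h⟩ := hadj <;> simp_all [Prod.ext_iff]
    calc _ ≤ ({(i, v.2)} : Set (Fin (Δ + 1) × Fin n)).ncard :=
          Set.ncard_le_ncard hsub (Set.finite_singleton _)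
      _ = 1 := Set.ncard_singleton _
  · intro f hf
    have hmaps : ∀ i ∈ (Finset.univ : Finset (Fin (Δ + 1))), (f i).2 ∈
        (Finset.univ : Finset (Fin n)) := fun _ _ => Finset.mem_univ _
    have hcard : (Finset.univ : Finset (Fin n)).card * (s - 1) <
        (Finset.univ : Finset (Fin (Δ + 1))).card := by
      simpa using hsize
    obtain ⟨j, _, hj⟩ := Finset.exists_lt_card_fiber_of_mul_lt_card_of_maps_to hmaps hcard
    obtain ⟨S, hS, hScard⟩ := Finset.exists_subset_card_eq
      (s := Finset.univ.filter fun i => (f i).2 = j) (n := s) (by omega)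
    refine ⟨S, hScard, fun a ha b hb hab => ?_⟩
    have ha' := Finset.mem_filter.1 (hS ha)
    have hb' := Finset.mem_filter.1 (hS hb)
    rw [SimpleGraph.fromRel_adj]
    refine ⟨fun h => hab ?_, Or.inl (by rw [ha'.2, hb'.2])⟩
    rw [← hf a, ← hf b, h]
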